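/- Let G′ be the directed graph obtained from the graph on vertices {U, X₀, X₁, X₂, D₁, D₂, o₁, o₂, Δ₁, Δ₂, E₁} with edge set {(U,D₁), (U,D₂), (U,X₀), (U,X₁), (U,X₂), (X₀,Δ₁), (X₀,Δ₂), (X₁,Δ₁), (X₁,Δ₂), (X₂,Δ₂), (X₀,D₁), (X₁,D₁), (X₀,D₂), (X₁,D₂), (X₂,D₂), (X₀,X₁), (X₁,X₂), (E₁,Δ₁), (E₁,Δ₂), (o₁,D₂), (o₁,Δ₁), (o₁,Δ₂), (o₂,Δ₂)} by adding the edge (o₁, X₂). (This is the pruned Δ-SWIG of the three-period staggered difference-in-differences model with treatment–covariate feedback, in which X₂ plays the role of the potential covariate X₂(0), affected by the fixed part o₁ of the period-1 treatment node.) Then in G′: (i) {Δ₂} and {D₁, D₂} are d-separated by {X₀, X₁, X₂, o₁, o₂}; and (ii) every subset Z of {X₀, X₁, X₂, Δ₁} such that {Δ₂} and {D₁, D₂} are d-separated by Z ∪ {o₁, o₂} in G′ must contain X₂; that is, the potential covariate X₂(0) is indispensable in every conditioning set that jointly d-separates the difference of untreated potential outcomes in period 2 from the treatment variables. -/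
import Mathlib


/-! ## Directed graphs, paths, d-separation -/

namespace DeltaSwig

variable {V : Type*}

/-- `b` is a descendant of `a`: reachable from `a` by a nonempty directed path. -/
def Descendant (E : V → V → Prop) (a b : V) : Prop := Relation.TransGen E a b

/-- A directed graph is a DAG if no vertex is related to itself by the
transitive closure of the edge relation. -/
def IsDAG (E : V → V → Prop) : Prop := ∀ v : V, ¬ Relation.TransGen E v v

/-- A path of length `k ≥ 1` between `v 0` and `v k`: pairwise distinct vertices,
consecutive vertices joined by an edge in either direction. -/
structure IsPath (E : V → V → Prop) (k : ℕ) (v : ℕ → V) : Prop where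
  one_le : 1 ≤ k
  inj : ∀ i ≤ k, ∀ j ≤ k, v i = v j → i = j
  adj : ∀ i < k, E (v i) (v (i + 1)) ∨ E (v (i + 1)) (v i)

/-- The interior vertex `v j` is a collider on the path `v`. -/
def IsCollider (E : V → V → Prop) (v : ℕ → V) (j : ℕ) : Prop :=
  E (v (j - 1)) (v j) ∧ E (v (j + 1)) (v j)

/-- The path `v` (of length `k`) is blocked by the set `Z`. -/
def Blocked (E : V → V → Prop) (k : ℕ) (v : ℕ → V) (Z : Set V) : Prop :=
  ∃ j, 0 < j ∧ j < k ∧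
    ((¬ IsCollider E v j ∧ v j ∈ Z) ∨
      (IsCollider E v j ∧ v j ∉ Z ∧ ∀ w, Descendant E (v j) w → w ∉ Z))

/-- `X` and `Y` are d-separated by `Z`: every path from a vertex of `X` to a
vertex of `Y` is blocked by `Z`. -/
def DSep (E : V → V → Prop) (X Y Z : Set V) : Prop :=
  ∀ (k : ℕ) (v : ℕ → V), IsPath E k v → v 0 ∈ X → v k ∈ Y → Blocked E k v Z

/-- Restriction of an edge relation to a set of kept vertices (vertex deletion). -/
def restrictEdge (E : V → V → Prop) (K : Set V) : V → V → Prop :=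
  fun a b => E a b ∧ a ∈ K ∧ b ∈ K

/-- The parents of a vertex. -/
def parents (E : V → V → Prop) (v : V) : Set V := {w | E w v}

end DeltaSwig

namespace DeltaSwig

/-- Vertices of the pruned Δ-SWIG of the three-period staggered
difference-in-differences model. -/
inductive V14 : Type
  | U | X0 | X1 | X2 | D1 | D2 | o1 | o2 | Δ1 | Δ2 | E1
  deriving DecidableEq

open V14 in
/-- Edges of the pruned three-period Δ-SWIG *with* treatment–covariate
feedback: the base edges together with `(o₁, X₂)`, so that `X₂` plays the role
of the potential covariate `X₂(0)`. -/
def E15 : V14 → V14 → Prop := fun a b =>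
  (a, b) ∈ ([(U, D1), (U, D2), (U, X0), (U, X1), (U, X2),
    (X0, Δ1), (X0, Δ2), (X1, Δ1), (X1, Δ2), (X2, Δ2),
    (X0, D1), (X1, D1), (X0, D2), (X1, D2), (X2, D2),
    (X0, X1), (X1, X2),
    (E1, Δ1), (E1, Δ2),
    (o1, D2), (o1, Δ1), (o1, Δ2), (o2, Δ2),
    (o1, X2)] : List (V14 × V14))

instance (a b : V14) : Decidable (E15 a b) := by unfold E15; infer_instance

open V14 in
lemma E15_noΔ2 : ∀ x, ¬ E15 Δ2 x := by intro x; cases x <;> decide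

open V14 in
lemma E15_noΔ1 : ∀ x, ¬ E15 Δ1 x := by intro x; cases x <;> decide

open V14 in
lemma E15_parentsΔ2 : ∀ x, E15 x Δ2 →
    x = X0 ∨ x = X1 ∨ x = X2 ∨ x = E1 ∨ x = o1 ∨ x = o2 := by
  intro x; cases x <;> decide

open V14 in
lemma E15_childE1 : ∀ x, E15 E1 x → x = Δ1 ∨ x = Δ2 := by
  intro x; cases x <;> decide

open V14 in
lemma E15_noIntoE1 : ∀ x, ¬ E15 x E1 := by intro x; cases x <;> decide

open V14 in
lemma descΔ1 : ∀ w, ¬ Descendant E15 Δ1 w := by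
  intro w h
  induction h with
  | single h => exact E15_noΔ1 _ h
  | tail _ _ ih => exact ih

open V14 in
/-- **three-period Δ-SWIG with treatment–covariate feedback.**
(i) `{Δ₂}` and `{D₁, D₂}` are d-separated by `{X₀, X₁, X₂, o₁, o₂}`; (ii) any
subset `Z` of `{X₀, X₁, X₂, Δ₁}` such that `{Δ₂}` and `{D₁, D₂}` are
d-separated by `Z ∪ {o₁, o₂}` must contain `X₂`: the potential covariate
`X₂(0)` is indispensable. -/
theorem deltaSWIG_treatment_covariate_feedback :
    DSep E15 {Δ2} {D1, D2} {X0, X1, X2, o1, o2} ∧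
    ∀ Z : Set V14, Z ⊆ {X0, X1, X2, Δ1} →
      DSep E15 {Δ2} {D1, D2} (Z ∪ {o1, o2}) → X2 ∈ Z := by
  constructor
  · -- part (i)
    intro k v hp h0 hk
    have h0' : v 0 = Δ2 := h0
    -- the first step must be into Δ2
    have hstep : E15 (v 1) (v 0) := by
      rcases hp.adj 0 hp.one_le with h | h
      · exact absurd h (h0' ▸ E15_noΔ2 _)
      · exact h
    have hnc1 : ¬ IsCollider E15 v 1 := fun hc => (h0' ▸ E15_noΔ2 (v 1) : ¬ _) hc.1
    have hv1 : v 1 = X0 ∨ v 1 = X1 ∨ v 1 = X2 ∨ v 1 = E1 ∨ v 1 = o1 ∨ v 1 = o2 :=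
      E15_parentsΔ2 _ (h0' ▸ hstep)
    -- helper: if v 1 is a known vertex in S, done (as soon as 1 < k)
    have hkne1 : ∀ (a : V14), v 1 = a → a ≠ D1 → a ≠ D2 → k ≠ 1 := by
      intro a ha hd1 hd2 hk1
      rcases hk with h | h
      · exact hd1 (ha ▸ hk1 ▸ h)
      · exact hd2 (ha ▸ hk1 ▸ h)
    rcases hv1 with h1 | h1 | h1 | h1 | h1 | h1
    case _ => -- X0
      have : 1 < k := lt_of_le_of_ne hp.one_le (Ne.symm (hkne1 _ h1 (by decide) (by decide)))
      exact ⟨1, one_pos, this, Or.inl ⟨hnc1, by rw [h1]; simp⟩⟩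
    case _ =>
      have : 1 < k := lt_of_le_of_ne hp.one_le (Ne.symm (hkne1 _ h1 (by decide) (by decide)))
      exact ⟨1, one_pos, this, Or.inl ⟨hnc1, by rw [h1]; simp⟩⟩
    case _ =>
      have : 1 < k := lt_of_le_of_ne hp.one_le (Ne.symm (hkne1 _ h1 (by decide) (by decide)))
      exact ⟨1, one_pos, this, Or.inl ⟨hnc1, by rw [h1]; simp⟩⟩
    case _ => -- E1 : the interesting case
      have hk2 : 1 < k := lt_of_le_of_ne hp.one_le (Ne.symm (hkne1 _ h1 (by decide) (by decide)))
      have hstep2 : E15 (v 1) (v 2) := by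
        rcases hp.adj 1 hk2 with h | h
        · exact h
        · exact absurd h (h1 ▸ E15_noIntoE1 _)
      have hv2 : v 2 = Δ1 ∨ v 2 = Δ2 := E15_childE1 _ (h1 ▸ hstep2)
      have hv2' : v 2 = Δ1 := by
        rcases hv2 with h | h
        · exact h
        · exact absurd (hp.inj 0 (by omega) 2 (by omega) (by rw [h0', h])) (by omega)
      have hk3 : 2 < k := by
        rcases Nat.lt_or_ge 2 k with h | h
        · exact h
        · have hk2' : k = 2 := by omega
          rcases hk with hh | hh
          · exact absurd (hk2' ▸ hh : v 2 = D1) (by rw [hv2']; decide)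
          · exact absurd (hk2' ▸ hh : v 2 = D2) (by rw [hv2']; decide)
      have hstep3 : E15 (v 3) (v 2) := by
        rcases hp.adj 2 hk3 with h | h
        · exact absurd h (hv2' ▸ E15_noΔ1 _)
        · exact h
      refine ⟨2, by omega, hk3, Or.inr ⟨⟨by simpa using (h1 ▸ hstep2), hstep3⟩, ?_, ?_⟩⟩
      · rw [hv2']; decide
      · intro w hw; exact absurd (hv2' ▸ hw) (descΔ1 w)
    case _ =>
      have : 1 < k := lt_of_le_of_ne hp.one_le (Ne.symm (hkne1 _ h1 (by decide) (by decide)))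
      exact ⟨1, one_pos, this, Or.inl ⟨hnc1, by rw [h1]; simp⟩⟩
    case _ =>
      have : 1 < k := lt_of_le_of_ne hp.one_le (Ne.symm (hkne1 _ h1 (by decide) (by decide)))
      exact ⟨1, one_pos, this, Or.inl ⟨hnc1, by rw [h1]; simp⟩⟩
  · -- part (ii)
    intro Z _ hsep
    set v : ℕ → V14 := fun n => if n = 0 then Δ2 else if n = 1 then X2 else D2 with hv
    have hpath : IsPath E15 2 v := by
      refine ⟨one_le_two, ?_, ?_⟩
      · intro i hi j hj hij
        interval_cases i <;> interval_cases j <;>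
          first | rfl | (rw [hv] at hij; simp at hij)
      · intro i hi
        interval_cases i
        · right; show E15 X2 Δ2; decide
        · left; show E15 X2 D2; decide
    have hb := hsep 2 v hpath rfl (by right; rfl)
    obtain ⟨j, hj0, hj2, hcase⟩ := hb
    have hj1 : j = 1 := by omega
    subst hj1
    rcases hcase with ⟨_, hmem⟩ | ⟨hc, _⟩
    · rcases hmem with hmem | hmem
      · simpa [hv] using hmem
      · exact absurd hmem (by simp [hv])
    · exact absurd hc.1 (by show ¬ E15 Δ2 X2; decide)

end DeltaSwig
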